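/- arXiv:2302.07321 — 7 statements merged into one kernel-verified Lean document; each statement's English description precedes it below -/
import Mathlib

section
/- Let L : R^k → R^k_{≥0} be a permutation equivariant multiclass loss satisfying: for all v and all y,j, v_y ≥ v_j implies L_y(v) ≤ L_j(v). Let p ∈ Δ^k with p_1 ≥ p_2 ≥ ... ≥ p_k, let v ∈ R^k be arbitrary, and let σ be a permutation such that v_{σ(1)} ≥ v_{σ(2)} ≥ ... ≥ v_{σ(k)}. Then C_p(v) ≥ C_p(σ(v)). -/
/-- Sorting the score vector in non-increasing order can only decrease the conditional risk
when the probability vector is non-increasing. -/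
theorem sorting_decreases_conditional_risk {k : ℕ} (hk : 2 ≤ k)
    (L : (Fin k → ℝ) → (Fin k → ℝ))
    (hL0 : ∀ v y, 0 ≤ L v y)
    (hequiv : ∀ (σ : Equiv.Perm (Fin k)) (v : Fin k → ℝ),
      L (fun j => v (σ j)) = fun j => L v (σ j))
    (hord : ∀ (v : Fin k → ℝ) (y j : Fin k), v j ≤ v y → L v y ≤ L v j)
    (p : Fin k → ℝ) (hp0 : ∀ j, 0 ≤ p j) (hp1 : ∑ j, p j = 1)
    (hpdesc : Antitone p)
    (v : Fin k → ℝ) (σ : Equiv.Perm (Fin k))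
    (hσ : Antitone (fun j => v (σ j))) :
    ∑ j, p j * L (fun i => v (σ i)) j ≤ ∑ j, p j * L v j := by
  have hLrw : ∀ j, L (fun i => v (σ i)) j = L v (σ j) := fun j =>
    congrFun (hequiv σ v) j
  set b : Fin k → ℝ := fun j => L v (σ j) with hb
  have hbmono : Monotone b := by
    intro i j hij
    exact hord v (σ i) (σ j) (hσ hij)
  have hanti : Antivary p b := by
    intro i j hlt
    by_contra h
    push_neg at h
    have : i < j := lt_of_not_ge fun hji => absurd (hbmono hji) (not_le.mpr hlt)
    exact absurd (hpdesc this.le) (not_le.mpr h)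
  have key : ∑ j, p j • b j ≤ ∑ j, p (σ j) • b j :=
    hanti.sum_smul_le_sum_comp_perm_smul
  calc ∑ j, p j * L (fun i => v (σ i)) j = ∑ j, p j • b j := by
        simp only [hLrw, smul_eq_mul]
        rfl
    _ ≤ ∑ j, p (σ j) • b j := key
    _ = ∑ j, p j * L v j := by
        simp only [smul_eq_mul, hb]
        exact Equiv.sum_comp σ (fun j => p j * L v j)
end

section
/- Let γ : R_{≥0} → R_{≥0} be continuously differentiable with γ'(x) > 0 for all x ≥ 0 and sup γ = +∞, and φ : R → R_{≥0} differentiable, non-increasing with φ'(0) < 0 and inf φ = 0. Let L be the associated Gamma-Phi loss. Let p ∈ Δ^k and y, y' ∈ [k] with p_{y'} > p_y. If {v^t} ⊆ R^k satisfies liminf_t (v^t_y − v^t_{y'}) > 0 and lim_t C_p(v^t) exists and is finite, then lim_t C_p(v^t) > C_p^*, the conditional Bayes risk. -/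
open Filter Topology

/-- The `y`-th component of the Gamma-Phi loss associated to `γ` and `φ`. -/
noncomputable def gammaPhiLoss {k : ℕ} (γ φ : ℝ → ℝ) (v : Fin k → ℝ) (y : Fin k) : ℝ :=
  γ (∑ j ∈ Finset.univ.erase y, φ (v y - v j))

/-- The conditional risk of the Gamma-Phi loss at `p`. -/
noncomputable def condRisk {k : ℕ} (γ φ : ℝ → ℝ) (p v : Fin k → ℝ) : ℝ :=
  ∑ y, p y * gammaPhiLoss γ φ v y

lemma gammaPhiLoss_comp_perm {k : ℕ} (γ φ : ℝ → ℝ) (v : Fin k → ℝ)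
    (σ : Equiv.Perm (Fin k)) (j : Fin k) :
    gammaPhiLoss γ φ (v ∘ σ) j = gammaPhiLoss γ φ v (σ j) := by
  unfold gammaPhiLoss
  congr 1
  refine Finset.sum_equiv σ (fun i => ?_) (fun i hi => ?_)
  · simp
  · simp

/-- If `p_{y'} > p_y`, `liminf_t (v^t_y − v^t_{y'}) > 0` and `lim_t C_p(v^t)` exists and is
finite, then this limit is strictly larger than the conditional Bayes risk `C_p^*`. -/
theorem limit_gt_bayes_risk {k : ℕ} (hk : 2 ≤ k) (γ φ : ℝ → ℝ)
    (hγ0 : ∀ x ≥ (0 : ℝ), 0 ≤ γ x)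
    (hγC1 : ContDiff ℝ 1 γ) (hγ' : ∀ x ≥ (0 : ℝ), 0 < deriv γ x)
    (hγsup : ¬ BddAbove (γ '' Set.Ici 0))
    (hφ0 : ∀ x, 0 ≤ φ x) (hφdiff : Differentiable ℝ φ)
    (hφ' : ∀ x, deriv φ x ≤ 0) (hφ'0 : deriv φ 0 < 0)
    (hφinf : ⨅ x : ℝ, φ x = 0)
    (p : Fin k → ℝ) (hp0 : ∀ j, 0 ≤ p j) (hp1 : ∑ j, p j = 1)
    (y y' : Fin k) (hpy : p y < p y')
    (v : ℕ → Fin k → ℝ)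
    (hliminf : 0 < liminf (fun t => ((v t y - v t y' : ℝ) : EReal)) atTop)
    (c : ℝ) (hc : Tendsto (fun t => condRisk γ φ p (v t)) atTop (𝓝 c)) :
    (⨅ u : Fin k → ℝ, condRisk γ φ p u) < c := by
  classical
  have hyy' : y ≠ y' := by rintro rfl; exact lt_irrefl _ hpy
  have hpy' : 0 < p y' := lt_of_le_of_lt (hp0 y) hpy
  have hφanti : Antitone φ := antitone_of_deriv_nonpos hφdiff hφ'
  have hLnn : ∀ (u : Fin k → ℝ) (j : Fin k), 0 ≤ gammaPhiLoss γ φ u j := fun u j =>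
    hγ0 _ (Finset.sum_nonneg fun i _ => hφ0 _)
  have hCnn : ∀ u : Fin k → ℝ, 0 ≤ condRisk γ φ p u :=
    fun u => Finset.sum_nonneg fun j _ => mul_nonneg (hp0 j) (hLnn u j)
  -- extract δ > 0 with eventually δ < v t y - v t y'
  obtain ⟨b, hb0, hbl⟩ := exists_between hliminf
  have hbt : b ≠ ⊤ := (hbl.trans_le le_top).ne
  have hbb : b ≠ ⊥ := (lt_of_le_of_lt bot_le hb0).ne'
  set δ : ℝ := b.toReal with hδdef
  have hcoe : ((δ : ℝ) : EReal) = b := EReal.coe_toReal hbt hbb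
  have hδ0 : 0 < δ := by
    rw [← EReal.coe_lt_coe_iff, hcoe]
    exact_mod_cast hb0
  have hev1 : ∀ᶠ t in atTop, δ < v t y - v t y' := by
    filter_upwards [eventually_lt_of_lt_liminf hbl] with t ht
    rw [← hcoe] at ht
    exact_mod_cast ht
  -- η > 0
  have hη : 0 < φ (-δ) - φ δ := by
    by_contra h
    push_neg at h
    have hconst : ∀ x ∈ Set.Ioo (-δ) δ, φ x = φ δ := fun x hx =>
      le_antisymm (by linarith [hφanti hx.1.le]) (hφanti hx.2.le)
    have heq : φ =ᶠ[𝓝 (0 : ℝ)] fun _ => φ δ := by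
      filter_upwards [Ioo_mem_nhds (neg_lt_zero.mpr hδ0) hδ0] with x hx using hconst x hx
    have hd0 : deriv φ 0 = 0 := by
      rw [heq.deriv_eq, deriv_const]
    rw [hd0] at hφ'0
    exact lt_irrefl _ hφ'0
  set η : ℝ := φ (-δ) - φ δ with hηdef
  -- γ strictly monotone on Ici 0
  have hγcont : Continuous γ := hγC1.continuous
  have hγmono : StrictMonoOn γ (Set.Ici 0) := by
    apply strictMonoOn_of_deriv_pos (convex_Ici 0) hγcont.continuousOn
    intro x hx
    rw [interior_Ici] at hx
    exact hγ' x hx.le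
  -- B with γ B > (c+1)/p y'
  obtain ⟨gB, ⟨B, hB0, rfl⟩, hBgt⟩ := not_bddAbove_iff.mp hγsup ((c + 1) / p y')
  have hB0' : (0 : ℝ) ≤ B := hB0
  -- ε : uniform gap for γ over [0,B]
  have hgcont : ContinuousOn (fun s => γ (s + η) - γ s) (Set.Icc 0 B) :=
    ((hγcont.comp (continuous_id.add continuous_const)).sub hγcont).continuousOn
  obtain ⟨ξ, hξmem, hξmin⟩ :=
    isCompact_Icc.exists_isMinOn (Set.nonempty_Icc.mpr hB0') hgcont
  set ε : ℝ := γ (ξ + η) - γ ξ with hεdef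
  have hε : 0 < ε :=
    sub_pos.mpr (hγmono hξmem.1 (add_nonneg hξmem.1 hη.le) (lt_add_of_pos_right _ hη))
  -- pick t
  have hev2 : ∀ᶠ t in atTop, condRisk γ φ p (v t) < c + (p y' - p y) * ε :=
    hc.eventually (gt_mem_nhds (by nlinarith))
  have hev3 : ∀ᶠ t in atTop, condRisk γ φ p (v t) < c + 1 :=
    hc.eventually (gt_mem_nhds (by linarith))
  obtain ⟨t, hδt, hCt, hCt1⟩ := (hev1.and (hev2.and hev3)).exists
  set u : Fin k → ℝ := v t with hudef
  set σ : Equiv.Perm (Fin k) := Equiv.swap y y' with hσdef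
  set S : ℝ := ∑ j ∈ Finset.univ.erase y, φ (u y - u j) with hSdef
  set S' : ℝ := ∑ j ∈ Finset.univ.erase y', φ (u y' - u j) with hS'def
  have hLy : gammaPhiLoss γ φ u y = γ S := rfl
  have hLy' : gammaPhiLoss γ φ u y' = γ S' := rfl
  have hSnn : 0 ≤ S := Finset.sum_nonneg fun i _ => hφ0 _
  have hS'nn : 0 ≤ S' := Finset.sum_nonneg fun i _ => hφ0 _
  have hy'mem : y' ∈ Finset.univ.erase y := by simp [hyy'.symm]
  have hymem : y ∈ Finset.univ.erase y' := by simp [hyy']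
  -- S + η ≤ S'
  have h1 : S + η ≤ S' := by
    have hsplit : S = φ (u y - u y') + ∑ j ∈ (Finset.univ.erase y).erase y',
        φ (u y - u j) := (Finset.add_sum_erase _ _ hy'mem).symm
    have hsplit' : S' = φ (u y' - u y) + ∑ j ∈ (Finset.univ.erase y').erase y,
        φ (u y' - u j) := (Finset.add_sum_erase _ _ hymem).symm
    have hE : (Finset.univ.erase y).erase y' = (Finset.univ.erase y').erase y :=
      Finset.erase_right_comm
    have hterm : ∑ j ∈ (Finset.univ.erase y).erase y', φ (u y - u j)
        ≤ ∑ j ∈ (Finset.univ.erase y').erase y, φ (u y' - u j) := by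
      rw [hE]
      exact Finset.sum_le_sum fun j _ => hφanti (by linarith [hδt])
    have hhead1 : φ (u y - u y') ≤ φ δ := hφanti hδt.le
    have hhead2 : φ (-δ) ≤ φ (u y' - u y) := hφanti (by linarith [hδt])
    rw [hsplit, hsplit']
    rw [hηdef]
    linarith
  -- S' ≤ B
  have h2 : S' ≤ B := by
    by_contra h
    push_neg at h
    have h3 : γ B < γ S' := hγmono hB0 hS'nn h
    have hle : p y' * γ S' ≤ condRisk γ φ p u := by
      rw [← hLy']
      exact Finset.single_le_sum (fun j _ => mul_nonneg (hp0 j) (hLnn u j))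
        (Finset.mem_univ y')
    have h4 : γ S' ≤ (c + 1) / p y' := by
      rw [le_div_iff₀ hpy']
      nlinarith
    linarith
  -- γ S' - γ S ≥ ε
  have h3 : ε ≤ γ S' - γ S := by
    have hSB : S ≤ B := by linarith
    have hmin : ε ≤ γ (S + η) - γ S := isMinOn_iff.mp hξmin S ⟨hSnn, hSB⟩
    have hmono2 : γ (S + η) ≤ γ S' :=
      hγmono.monotoneOn (add_nonneg hSnn hη.le) hS'nn h1
    linarith
  -- swap identity
  have hswap : condRisk γ φ p (u ∘ σ) = ∑ j, p (σ j) * gammaPhiLoss γ φ u j := by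
    unfold condRisk
    calc ∑ j, p j * gammaPhiLoss γ φ (u ∘ σ) j
        = ∑ j, p j * gammaPhiLoss γ φ u (σ j) := by
          simp_rw [gammaPhiLoss_comp_perm]
      _ = ∑ j, p (σ j) * gammaPhiLoss γ φ u j := by
          refine Fintype.sum_equiv σ _ _ (fun x => ?_)
          rw [hσdef]
          rw [Equiv.swap_apply_self]
  have hdiff : condRisk γ φ p u - condRisk γ φ p (u ∘ σ)
      = (p y' - p y) * (gammaPhiLoss γ φ u y' - gammaPhiLoss γ φ u y) := by
    rw [hswap]
    unfold condRisk
    rw [← Finset.sum_sub_distrib]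
    have hzero : ∀ j ∈ (Finset.univ : Finset (Fin k)), j ∉ ({y, y'} : Finset (Fin k)) →
        p j * gammaPhiLoss γ φ u j - p (σ j) * gammaPhiLoss γ φ u j = 0 := by
      intro j _ hj
      simp only [Finset.mem_insert, Finset.mem_singleton] at hj
      push_neg at hj
      rw [hσdef, Equiv.swap_apply_of_ne_of_ne hj.1 hj.2]
      ring
    rw [← Finset.sum_subset (Finset.subset_univ ({y, y'} : Finset (Fin k))) hzero]
    rw [Finset.sum_pair hyy']
    rw [hσdef, Equiv.swap_apply_left, Equiv.swap_apply_right]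
    ring
  have hfinal : condRisk γ φ p (u ∘ σ) < c := by
    rw [hLy, hLy'] at hdiff
    have hmul : (p y' - p y) * ε ≤ (p y' - p y) * (γ S' - γ S) :=
      mul_le_mul_of_nonneg_left h3 (by linarith)
    linarith [hCt]
  exact lt_of_le_of_lt
    (ciInf_le ⟨0, by rintro x ⟨w, rfl⟩; exact hCnn w⟩ (u ∘ σ)) hfinal
end

section
/- Let γ : R_{≥0} → R_{≥0} be continuously differentiable with γ' > 0 on [0,∞) and sup γ = +∞, and φ : R → R_{≥0} differentiable, non-increasing, with φ'(0) < 0 and inf φ = 0. Let L be the associated Gamma-Phi loss on R^ℓ. Suppose q ∈ Δ^ℓ and α ∈ R^ℓ are such that α minimizes C_q over R^ℓ and α_1 = α_2. Then q_1 = q_2. -/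
open Filter Topology

lemma inner_deriv_self {l : ℕ} (φ : ℝ → ℝ) (hφ : Differentiable ℝ φ) (α : Fin l → ℝ) (i : Fin l) :
    HasDerivAt (fun t => ∑ j ∈ Finset.univ.erase i,
        φ (Function.update α i t i - Function.update α i t j))
      (∑ j ∈ Finset.univ.erase i, deriv φ (α i - α j)) (α i) := by
  have hfun : (fun t => ∑ j ∈ Finset.univ.erase i,
      φ (Function.update α i t i - Function.update α i t j))
      = fun t => ∑ j ∈ Finset.univ.erase i, φ (t - α j) := by
    funext t
    refine Finset.sum_congr rfl fun j hj => ?_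
    rw [Function.update_self, Function.update_of_ne (Finset.ne_of_mem_erase hj)]
  rw [hfun]
  apply HasDerivAt.fun_sum
  intro j _
  have h1 : HasDerivAt (fun t : ℝ => t - α j) 1 (α i) := (hasDerivAt_id _).sub_const _
  simpa [Function.comp_def] using ((hφ (α i - α j)).hasDerivAt).comp (α i) h1

lemma inner_deriv_other {l : ℕ} (φ : ℝ → ℝ) (hφ : Differentiable ℝ φ) (α : Fin l → ℝ)
    (i y : Fin l) (hyi : y ≠ i) :
    HasDerivAt (fun t => ∑ j ∈ Finset.univ.erase y,
        φ (Function.update α i t y - Function.update α i t j))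
      (-deriv φ (α y - α i)) (α i) := by
  have hi : i ∈ Finset.univ.erase y := Finset.mem_erase.2 ⟨Ne.symm hyi, Finset.mem_univ _⟩
  have hfun : (fun t => ∑ j ∈ Finset.univ.erase y,
      φ (Function.update α i t y - Function.update α i t j))
      = fun t => φ (α y - t) + ∑ j ∈ (Finset.univ.erase y).erase i, φ (α y - α j) := by
    funext t
    rw [← Finset.add_sum_erase _ _ hi]
    congr 1
    · rw [Function.update_of_ne hyi, Function.update_self]
    · refine Finset.sum_congr rfl fun j hj => ?_
      rw [Function.update_of_ne hyi, Function.update_of_ne (Finset.ne_of_mem_erase hj)]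
  rw [hfun]
  have h1 : HasDerivAt (fun t : ℝ => α y - t) (-1) (α i) := by
    simpa using (hasDerivAt_id' (α i)).const_sub (α y)
  have := ((hφ (α y - α i)).hasDerivAt).comp (α i) h1
  simpa [mul_comm, Function.comp_def] using
    this.add_const (∑ j ∈ (Finset.univ.erase y).erase i, φ (α y - α j))

lemma condRisk_partial {l : ℕ} (γ φ : ℝ → ℝ) (hγ : Differentiable ℝ γ)
    (hφ : Differentiable ℝ φ) (q α : Fin l → ℝ) (i : Fin l) :
    HasDerivAt (fun t => condRisk γ φ q (Function.update α i t))
      (q i * (deriv γ (∑ j ∈ Finset.univ.erase i, φ (α i - α j)) *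
          ∑ j ∈ Finset.univ.erase i, deriv φ (α i - α j))
        + ∑ y ∈ Finset.univ.erase i, q y *
            (deriv γ (∑ j ∈ Finset.univ.erase y, φ (α y - α j)) * (-deriv φ (α y - α i))))
      (α i) := by
  have key : HasDerivAt (fun t => condRisk γ φ q (Function.update α i t))
      (∑ y : Fin l, (if y = i then
          q i * (deriv γ (∑ j ∈ Finset.univ.erase i, φ (α i - α j)) *
            ∑ j ∈ Finset.univ.erase i, deriv φ (α i - α j))
        else q y * (deriv γ (∑ j ∈ Finset.univ.erase y, φ (α y - α j)) *
            (-deriv φ (α y - α i))))) (α i) := by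
    unfold condRisk gammaPhiLoss
    apply HasDerivAt.fun_sum
    intro y _
    by_cases hy : y = i
    · subst hy
      simp only [if_pos rfl]
      have hin := inner_deriv_self φ hφ α y
      have hg : HasDerivAt γ (deriv γ (∑ j ∈ Finset.univ.erase y, φ (α y - α j)))
          ((fun t => ∑ j ∈ Finset.univ.erase y,
            φ (Function.update α y t y - Function.update α y t j)) (α y)) := by
        simpa [Function.update_eq_self] using (hγ _).hasDerivAt
      simpa [mul_assoc] using (hg.comp (α y) hin).const_mul (q y)
    · simp only [if_neg hy]
      have hin := inner_deriv_other φ hφ α i y hy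
      have hg : HasDerivAt γ (deriv γ (∑ j ∈ Finset.univ.erase y, φ (α y - α j)))
          ((fun t => ∑ j ∈ Finset.univ.erase y,
            φ (Function.update α i t y - Function.update α i t j)) (α i)) := by
        simpa [Function.update_eq_self] using (hγ _).hasDerivAt
      simpa [mul_assoc, mul_comm, mul_left_comm] using (hg.comp (α i) hin).const_mul (q y)
  convert key using 1
  rw [← Finset.add_sum_erase _ _ (Finset.mem_univ i)]
  congr 1
  · simp
  · exact (Finset.sum_congr rfl fun y hy => by rw [if_neg (Finset.ne_of_mem_erase hy)]).symm

/-- If `α` minimizes the conditional risk `C_q` of a Gamma-Phi loss and `α_1 = α_2`,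
then `q_1 = q_2`. -/
theorem minimizer_equal_coords_imp_equal_probs {l : ℕ} (hl : 2 ≤ l) (γ φ : ℝ → ℝ)
    (hγ0 : ∀ x ≥ (0 : ℝ), 0 ≤ γ x)
    (hγC1 : ContDiff ℝ 1 γ) (hγ' : ∀ x ≥ (0 : ℝ), 0 < deriv γ x)
    (hγsup : ¬ BddAbove (γ '' Set.Ici 0))
    (hφ0 : ∀ x, 0 ≤ φ x) (hφdiff : Differentiable ℝ φ)
    (hφ' : ∀ x, deriv φ x ≤ 0) (hφ'0 : deriv φ 0 < 0)
    (hφinf : ⨅ x : ℝ, φ x = 0)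
    (q : Fin l → ℝ) (hq0 : ∀ j, 0 ≤ q j) (hq1 : ∑ j, q j = 1)
    (α : Fin l → ℝ)
    (hmin : ∀ v : Fin l → ℝ, condRisk γ φ q α ≤ condRisk γ φ q v)
    (hα : α ⟨0, by omega⟩ = α ⟨1, by omega⟩) :
    q ⟨0, by omega⟩ = q ⟨1, by omega⟩ := by
  set i0 : Fin l := ⟨0, by omega⟩
  set i1 : Fin l := ⟨1, by omega⟩
  have hne : i0 ≠ i1 := by simp [i0, i1, Fin.ext_iff]
  have hγd : Differentiable ℝ γ := hγC1.differentiable one_ne_zero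
  have hDzero : ∀ i : Fin l,
      q i * (deriv γ (∑ j ∈ Finset.univ.erase i, φ (α i - α j)) *
          ∑ j ∈ Finset.univ.erase i, deriv φ (α i - α j))
        + ∑ y ∈ Finset.univ.erase i, q y *
            (deriv γ (∑ j ∈ Finset.univ.erase y, φ (α y - α j)) * (-deriv φ (α y - α i))) = 0 := by
    intro i
    have hd := condRisk_partial γ φ hγd hφdiff q α i
    have hlm : IsLocalMin (fun t => condRisk γ φ q (Function.update α i t)) (α i) := by
      apply Filter.Eventually.of_forall
      intro t
      simpa [Function.update_eq_self] using hmin (Function.update α i t)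
    have := hlm.deriv_eq_zero
    rw [hd.deriv] at this
    exact this
  have h0 := hDzero i0
  have h1 := hDzero i1
  have hi1mem : i1 ∈ Finset.univ.erase i0 := Finset.mem_erase.2 ⟨hne.symm, Finset.mem_univ _⟩
  have hi0mem : i0 ∈ Finset.univ.erase i1 := Finset.mem_erase.2 ⟨hne, Finset.mem_univ _⟩
  have he' : (Finset.univ.erase i1).erase i0 = (Finset.univ.erase i0).erase i1 :=
    Finset.erase_right_comm
  have hα10 : α i1 = α i0 := hα.symm
  -- abbreviations (plain reals, we prove the two equations in terms of them)
  set e : Finset (Fin l) := (Finset.univ.erase i0).erase i1 with he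
  set S : ℝ := ∑ j ∈ Finset.univ.erase i0, φ (α i0 - α j) with hS
  set G : ℝ := deriv γ S with hG
  set P : ℝ := deriv φ 0 with hP
  set A : ℝ := ∑ j ∈ e, deriv φ (α i0 - α j) with hA
  set B : ℝ := ∑ y ∈ e, q y *
      (deriv γ (∑ j ∈ Finset.univ.erase y, φ (α y - α j)) * (-deriv φ (α y - α i0))) with hB
  have hS1 : ∑ j ∈ Finset.univ.erase i1, φ (α i1 - α j) = S := by
    rw [← Finset.add_sum_erase _ _ hi0mem, he', hS, ← Finset.add_sum_erase _ _ hi1mem]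
    simp only [hα10, sub_self]
    rfl
  have hsum0 : ∑ j ∈ Finset.univ.erase i0, deriv φ (α i0 - α j) = P + A := by
    rw [← Finset.add_sum_erase _ _ hi1mem]
    simp only [hα10, sub_self]
    rfl
  have hsum1 : ∑ j ∈ Finset.univ.erase i1, deriv φ (α i1 - α j) = P + A := by
    rw [← Finset.add_sum_erase _ _ hi0mem, he']
    simp only [hα10, sub_self]
    rfl
  have hcross0 : ∑ y ∈ Finset.univ.erase i0, q y *
      (deriv γ (∑ j ∈ Finset.univ.erase y, φ (α y - α j)) * (-deriv φ (α y - α i0)))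
      = q i1 * (G * (-P)) + B := by
    rw [← Finset.add_sum_erase _ _ hi1mem, hS1]
    simp only [hα10, sub_self]
    rfl
  have hcross1 : ∑ y ∈ Finset.univ.erase i1, q y *
      (deriv γ (∑ j ∈ Finset.univ.erase y, φ (α y - α j)) * (-deriv φ (α y - α i1)))
      = q i0 * (G * (-P)) + B := by
    rw [← Finset.add_sum_erase _ _ hi0mem, he']
    simp only [hα10, sub_self]
    rfl
  rw [hsum0, hcross0] at h0
  rw [hsum1, hS1, ← hG, hcross1] at h1
  have hSnn : 0 ≤ S := Finset.sum_nonneg fun j _ => hφ0 _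
  have hGpos : 0 < G := hγ' S hSnn
  have hAle : A ≤ 0 := Finset.sum_nonpos fun j _ => hφ' _
  have hPneg : P < 0 := hφ'0
  have hkey : (q i0 - q i1) * (G * (2 * P + A)) = 0 := by linear_combination h0 - h1
  have hfac : G * (2 * P + A) < 0 := mul_neg_of_pos_of_neg hGpos (by linarith)
  rcases mul_eq_zero.mp hkey with h | h
  · linarith
  · exact absurd h (ne_of_lt hfac)
end

section
/- Let L : R^k → R^k_{≥0} be a permutation equivariant multiclass loss that is not classification-calibrated. Then there exists p ∈ Δ^k with p_1 ≥ p_2 ≥ ... ≥ p_k and an index z ∈ {2,...,k} such that p_{z−1} > p_z and C_p^* = inf{ C_p(v) : v ∈ R^k, v_z = max_j v_j }. -/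
/-- The conditional risk of a general loss `L` at `p`. -/
noncomputable def condRiskL {k : ℕ} (L : (Fin k → ℝ) → Fin k → ℝ) (p v : Fin k → ℝ) : ℝ :=
  ∑ y, p y * L v y

/-- Classification-calibration of a multiclass loss. -/
def ClassificationCalibrated {k : ℕ} (L : (Fin k → ℝ) → Fin k → ℝ) : Prop :=
  ∀ p : Fin k → ℝ, (∀ j, 0 ≤ p j) → (∑ j, p j = 1) →
    ∀ y : Fin k, (∃ j, p y < p j) →
      (⨅ v : Fin k → ℝ, condRiskL L p v) <
        sInf {c | ∃ v : Fin k → ℝ, (∀ j, v j ≤ v y) ∧ c = condRiskL L p v}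

section Aux

variable {k : ℕ} {L : (Fin k → ℝ) → Fin k → ℝ}

lemma transfer_risk
    (hequiv : ∀ (σ : Equiv.Perm (Fin k)) (v : Fin k → ℝ),
      L (fun j => v (σ j)) = fun j => L v (σ j))
    (σ : Equiv.Perm (Fin k)) (p v : Fin k → ℝ) :
    condRiskL L (fun i => p (σ i)) (fun j => v (σ j)) = condRiskL L p v := by
  unfold condRiskL
  rw [hequiv σ v]
  exact Equiv.sum_comp σ (fun i => p i * L v i)

lemma transfer_set
    (hequiv : ∀ (σ : Equiv.Perm (Fin k)) (v : Fin k → ℝ),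
      L (fun j => v (σ j)) = fun j => L v (σ j))
    (σ : Equiv.Perm (Fin k)) (p : Fin k → ℝ) (z : Fin k) :
    {c | ∃ w : Fin k → ℝ, (∀ j, w j ≤ w z) ∧ c = condRiskL L (fun i => p (σ i)) w}
      = {c | ∃ v : Fin k → ℝ, (∀ j, v j ≤ v (σ z)) ∧ c = condRiskL L p v} := by
  ext c
  constructor
  · rintro ⟨w, hw, rfl⟩
    refine ⟨fun i => w (σ.symm i), fun j => ?_, ?_⟩
    · simpa using hw (σ.symm j)
    · have : (fun j => (fun i => w (σ.symm i)) (σ j)) = w := by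
        funext j; simp
      rw [← transfer_risk hequiv σ p (fun i => w (σ.symm i)), this]
  · rintro ⟨v, hv, rfl⟩
    exact ⟨fun j => v (σ j), fun j => hv (σ j), (transfer_risk hequiv σ p v).symm⟩

lemma transfer_inf
    (hequiv : ∀ (σ : Equiv.Perm (Fin k)) (v : Fin k → ℝ),
      L (fun j => v (σ j)) = fun j => L v (σ j))
    (σ : Equiv.Perm (Fin k)) (p : Fin k → ℝ) :
    (⨅ w : Fin k → ℝ, condRiskL L (fun i => p (σ i)) w)
      = ⨅ v : Fin k → ℝ, condRiskL L p v := by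
  rw [← sInf_range, ← sInf_range]
  congr 1
  ext c
  constructor
  · rintro ⟨w, rfl⟩
    refine ⟨fun i => w (σ.symm i), ?_⟩
    have h2 : (fun j => (fun i => w (σ.symm i)) (σ j)) = w := by
      funext j; simp
    show condRiskL L p (fun i => w (σ.symm i)) = condRiskL L (fun i => p (σ i)) w
    rw [← transfer_risk hequiv σ p (fun i => w (σ.symm i)), h2]
  · rintro ⟨v, rfl⟩
    exact ⟨fun j => v (σ j), transfer_risk hequiv σ p v⟩

end Aux

/-- If a permutation equivariant loss is not classification-calibrated, there exist a
probability vector `p` with non-increasing entries and an index `z ≥ 1` with `p_{z−1} > p_z`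
such that the Bayes conditional risk is attained in the limit over score vectors maximized
at coordinate `z`. -/
theorem not_calibrated_structure {k : ℕ} (hk : 2 ≤ k)
    (L : (Fin k → ℝ) → Fin k → ℝ)
    (hL0 : ∀ v y, 0 ≤ L v y)
    (hequiv : ∀ (σ : Equiv.Perm (Fin k)) (v : Fin k → ℝ),
      L (fun j => v (σ j)) = fun j => L v (σ j))
    (hnc : ¬ ClassificationCalibrated L) :
    ∃ p : Fin k → ℝ, (∀ j, 0 ≤ p j) ∧ (∑ j, p j = 1) ∧ Antitone p ∧
      ∃ z z' : Fin k, (z' : ℕ) + 1 = (z : ℕ) ∧ p z' > p z ∧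
        (⨅ v : Fin k → ℝ, condRiskL L p v)
          = sInf {c | ∃ v : Fin k → ℝ, (∀ j, v j ≤ v z) ∧ c = condRiskL L p v} := by
  unfold ClassificationCalibrated at hnc
  push_neg at hnc
  obtain ⟨p, hp0, hp1, y, hy, hle⟩ := hnc
  -- nonnegativity of the risk
  have hrisk0 : ∀ (q : Fin k → ℝ), (∀ j, 0 ≤ q j) → ∀ v, 0 ≤ condRiskL L q v := by
    intro q hq v
    exact Finset.sum_nonneg fun i _ => mul_nonneg (hq i) (hL0 v i)
  -- the unconstrained inf is at most the constrained sInf (for any index)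
  have hbdd : BddBelow (Set.range (condRiskL L p)) :=
    ⟨0, by rintro c ⟨v, rfl⟩; exact hrisk0 p hp0 v⟩
  have hgen : ∀ z : Fin k,
      (⨅ v : Fin k → ℝ, condRiskL L p v)
        ≤ sInf {c | ∃ v : Fin k → ℝ, (∀ j, v j ≤ v z) ∧ c = condRiskL L p v} := by
    intro z
    refine le_csInf ⟨condRiskL L p 0, ⟨0, fun j => le_refl _, rfl⟩⟩ ?_
    rintro c ⟨v, hv, rfl⟩
    exact ciInf_le hbdd v
  have heq : (⨅ v : Fin k → ℝ, condRiskL L p v)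
      = sInf {c | ∃ v : Fin k → ℝ, (∀ j, v j ≤ v y) ∧ c = condRiskL L p v} :=
    le_antisymm (hgen y) hle
  -- sort p in decreasing order
  set σ : Equiv.Perm (Fin k) := Tuple.sort (fun i => -p i) with hσ
  have hmono : Monotone ((fun i => -p i) ∘ σ) := Tuple.monotone_sort (fun i => -p i)
  set q : Fin k → ℝ := fun i => p (σ i) with hq
  have hanti : Antitone q := by
    intro a b hab
    have := hmono hab
    simp only [Function.comp] at this
    linarith
  have hq0 : ∀ j, 0 ≤ q j := fun j => hp0 (σ j)
  have hq1 : ∑ j, q j = 1 := by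
    rw [hq]; rw [Equiv.sum_comp σ p]; exact hp1
  -- transfer the equality to q at index y0
  set y0 : Fin k := σ.symm y with hy0
  have hσy0 : σ y0 = y := by simp [hy0]
  have heqq : (⨅ v : Fin k → ℝ, condRiskL L q v)
      = sInf {c | ∃ v : Fin k → ℝ, (∀ j, v j ≤ v y0) ∧ c = condRiskL L q v} := by
    rw [hq, transfer_inf hequiv σ p, transfer_set hequiv σ p y0, hσy0]
    exact heq
  -- q y0 is not maximal and q 0 is maximal
  obtain ⟨j, hj⟩ := hy
  have hjq : q y0 < q (σ.symm j) := by simp [hq, hσy0]; exact hj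
  have hkpos : 0 < k := lt_of_lt_of_le (by norm_num) hk
  set i0 : Fin k := ⟨0, hkpos⟩ with hi0
  have hq0max : ∀ i, q i ≤ q i0 := fun i => hanti (by simp [Fin.le_def, hi0])
  have h0y0 : q y0 < q i0 := lt_of_lt_of_le hjq (hq0max _)
  set S : Finset (Fin k) := Finset.univ.filter (fun i => q i ≤ q y0) with hS
  have hSne : S.Nonempty := ⟨y0, by simp [hS]⟩
  set z : Fin k := S.min' hSne with hz
  have hzS : z ∈ S := S.min'_mem hSne
  have hzle : q z ≤ q y0 := by
    have := hzS; simp [hS] at this; exact this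
  have hzy0 : z ≤ y0 := S.min'_le y0 (by simp [hS])
  have hqz : q z = q y0 := le_antisymm hzle (hanti hzy0)
  have hz0 : z ≠ i0 := by
    intro h
    rw [h] at hzle
    exact absurd hzle (not_le_of_gt h0y0)
  have hzpos : 0 < (z : ℕ) := Nat.pos_of_ne_zero (fun h => hz0 (Fin.ext h))
  set z' : Fin k := ⟨(z : ℕ) - 1, lt_trans (Nat.sub_lt hzpos one_pos) z.isLt⟩ with hz'
  have hz'z : (z' : ℕ) + 1 = (z : ℕ) := Nat.succ_pred_eq_of_pos hzpos
  have hz'lt : z' < z := by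
    rw [Fin.lt_def]; omega
  have hz'notS : z' ∉ S := fun h => absurd (S.min'_le z' h) (not_le_of_gt hz'lt)
  have hqz' : q y0 < q z' := by
    by_contra h
    push_neg at h
    exact hz'notS (by simp [hS]; exact h)
  -- transfer the equality from index y0 to index z via the swap
  have hswap : (fun i => q ((Equiv.swap z y0) i)) = q := by
    funext i
    rcases eq_or_ne i z with rfl | hiz
    · rw [Equiv.swap_apply_left]; exact hqz.symm
    rcases eq_or_ne i y0 with rfl | hiy
    · rw [Equiv.swap_apply_right]; exact hqz
    · rw [Equiv.swap_apply_of_ne_of_ne hiz hiy]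
  have hsetz : {c | ∃ v : Fin k → ℝ, (∀ j, v j ≤ v z) ∧ c = condRiskL L q v}
      = {c | ∃ v : Fin k → ℝ, (∀ j, v j ≤ v y0) ∧ c = condRiskL L q v} := by
    have := transfer_set hequiv (Equiv.swap z y0) q z
    rw [hswap] at this
    rw [this, Equiv.swap_apply_left]
  refine ⟨q, hq0, hq1, hanti, z, z', hz'z, ?_, ?_⟩
  · rw [hqz]; exact hqz'
  · rw [hsetz]; exact heqq
end

section
/- Define φ(x) = exp(−x) and γ(x) = 1 − (x−1)^2 for x < 1, γ(x) = 2(x−1)^2 + 1 for x ≥ 1. Then γ : R_{≥0} → R_{≥0} is strictly increasing with sup γ = +∞, and φ is nonnegative, differentiable, non-increasing with φ'(0) < 0 and inf φ = 0, but the associated Gamma-Phi loss L_y(v) = γ(Σ_{j≠y} φ(v_y − v_j)) on R^k (k ≥ 2) is NOT classification-calibrated. -/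
/-- The piecewise quadratic `γ` of the counterexample. -/
noncomputable def γc (x : ℝ) : ℝ := if x < 1 then 1 - (x - 1) ^ 2 else 2 * (x - 1) ^ 2 + 1

/-- `φ(x) = exp(−x)`. -/
noncomputable def φc (x : ℝ) : ℝ := Real.exp (-x)

lemma gamma_nonneg : ∀ x ≥ (0:ℝ), 0 ≤ γc x := by
  intro x hx
  unfold γc
  split_ifs with h <;> nlinarith

lemma gamma_unbdd : ¬ BddAbove (γc '' Set.Ici 0) := by
  rintro ⟨B, hB⟩
  have hx2 : (2:ℝ) ≤ max 2 (B+1) := le_max_left _ _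
  have hxB : B+1 ≤ max 2 (B+1) := le_max_right _ _
  have hmem : γc (max 2 (B+1)) ∈ γc '' Set.Ici 0 := ⟨_, Set.mem_Ici.mpr (by linarith), rfl⟩
  have h := hB hmem
  rw [γc, if_neg (by push_neg; linarith)] at h
  nlinarith

lemma phi_hasDeriv (x : ℝ) : HasDerivAt φc (-Real.exp (-x)) x := by
  have h := (Real.hasDerivAt_exp (-x)).comp x (hasDerivAt_neg x)
  rw [show φc = Real.exp ∘ Neg.neg from rfl]
  simpa [mul_comm] using h

lemma phi_iInf : ⨅ x : ℝ, φc x = 0 := by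
  have hbdd : BddBelow (Set.range φc) := ⟨0, by rintro _ ⟨x, rfl⟩; exact (Real.exp_pos _).le⟩
  refine le_antisymm ?_ (le_ciInf fun x => (Real.exp_pos _).le)
  by_contra h
  push_neg at h
  have hI := ciInf_le hbdd (-Real.log ((⨅ x : ℝ, φc x) / 2))
  rw [φc, neg_neg, Real.exp_log (by linarith)] at hI
  linarith

lemma gamma_strict : StrictMonoOn γc (Set.Ici 0) := by
  intro a ha b hb hab
  simp only [Set.mem_Ici] at ha hb
  unfold γc
  split_ifs with h1 h2 h2 <;> nlinarith

lemma key (t : ℝ) (ht : 0 < t) : 1 ≤ 9/20 * γc t + 11/20 * γc (1/t) := by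
  have ht2 : (0:ℝ) < t^2 := by positivity
  rcases lt_trichotomy t 1 with h | h | h
  · have h1 : 1 < 1/t := by rw [lt_div_iff₀ ht]; linarith
    rw [γc, if_pos h, γc, if_neg (by linarith)]
    have e : (1/t - 1)^2 = (1-t)^2/t^2 := by field_simp
    rw [e]
    have h3 : (1-t)^2 ≤ (1-t)^2/t^2 := by
      rw [le_div_iff₀ ht2]
      nlinarith [sq_nonneg (1-t), sq_nonneg (1-t^2)]
    nlinarith
  · subst h; norm_num [γc]
  · have h1 : 1/t < 1 := by rw [div_lt_one ht]; linarith
    rw [γc, if_neg (by linarith), γc, if_pos h1]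
    have e : (1/t - 1)^2 = (1-t)^2/t^2 := by field_simp
    rw [e]
    have h3 : (1-t)^2/t^2 ≤ (1-t)^2 := by
      rw [div_le_iff₀ ht2]
      nlinarith [sq_nonneg (1-t), sq_nonneg (1-t^2)]
    nlinarith

lemma main_neg {k : ℕ} (hk : 2 ≤ k) :
    ¬ (∀ p : Fin k → ℝ, (∀ j, 0 ≤ p j) → (∑ j, p j = 1) →
        ∀ y : Fin k, (∃ j, p y < p j) →
          (⨅ v : Fin k → ℝ, condRisk γc φc p v) <
            sInf {c | ∃ v : Fin k → ℝ, (∀ j, v j ≤ v y) ∧ c = condRisk γc φc p v}) := by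
  intro H
  set i0 : Fin k := ⟨0, by omega⟩ with hi0
  set i1 : Fin k := ⟨1, by omega⟩ with hi1
  have hne : i1 ≠ i0 := by simp [hi0, hi1, Fin.ext_iff]
  set p : Fin k → ℝ :=
    fun j => (if j = i0 then (9/20:ℝ) else 0) + (if j = i1 then 11/20 else 0) with hp
  have hpnn : ∀ j, 0 ≤ p j := by
    intro j; simp only [hp]; split_ifs <;> norm_num
  have hpsum : ∑ j, p j = 1 := by
    simp [hp, Finset.sum_add_distrib, Finset.sum_ite_eq']
    norm_num
  have hlt : p i0 < p i1 := by
    simp only [hp, if_pos rfl, if_neg hne, if_neg (Ne.symm hne)]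
    norm_num
  have hmem1 : i1 ∈ Finset.univ.erase i0 := Finset.mem_erase.mpr ⟨hne, Finset.mem_univ _⟩
  have hmem0 : i0 ∈ Finset.univ.erase i1 := Finset.mem_erase.mpr ⟨Ne.symm hne, Finset.mem_univ _⟩
  have hrisk : ∀ v : Fin k → ℝ, condRisk γc φc p v
      = 9/20 * gammaPhiLoss γc φc v i0 + 11/20 * gammaPhiLoss γc φc v i1 := by
    intro v
    simp [condRisk, hp, add_mul, Finset.sum_add_distrib, ite_mul, Finset.sum_ite_eq']
  have hm : MonotoneOn γc (Set.Ici 0) := gamma_strict.monotoneOn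
  -- lower bound
  have hlow : ∀ v : Fin k → ℝ, 1 ≤ condRisk γc φc p v := by
    intro v
    rw [hrisk]
    set t := φc (v i0 - v i1) with htdef
    have ht : 0 < t := Real.exp_pos _
    have h1t : φc (v i1 - v i0) = 1/t := by
      rw [htdef]; unfold φc
      rw [one_div, ← Real.exp_neg, neg_neg]
      ring_nf
    have hS0 : t ≤ ∑ j ∈ Finset.univ.erase i0, φc (v i0 - v j) :=
      Finset.single_le_sum (f := fun j => φc (v i0 - v j))
        (fun j _ => (Real.exp_pos _).le) hmem1
    have hS1 : 1/t ≤ ∑ j ∈ Finset.univ.erase i1, φc (v i1 - v j) := by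
      rw [← h1t]
      exact Finset.single_le_sum (f := fun j => φc (v i1 - v j))
        (fun j _ => (Real.exp_pos _).le) hmem0
    have h1tpos : 0 < 1/t := by positivity
    have e0 : γc t ≤ γc (∑ j ∈ Finset.univ.erase i0, φc (v i0 - v j)) :=
      hm (Set.mem_Ici.mpr ht.le) (Set.mem_Ici.mpr (ht.le.trans hS0)) hS0
    have e1 : γc (1/t) ≤ γc (∑ j ∈ Finset.univ.erase i1, φc (v i1 - v j)) :=
      hm (Set.mem_Ici.mpr h1tpos.le) (Set.mem_Ici.mpr (h1tpos.le.trans hS1)) hS1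
    have hkey := key t ht
    simp only [gammaPhiLoss]
    linarith
  -- upper bound: the constrained infimum is ≤ 1
  set S : Set ℝ :=
    {c | ∃ v : Fin k → ℝ, (∀ j, v j ≤ v i0) ∧ c = condRisk γc φc p v} with hS
  have hSbdd : BddBelow S := ⟨1, by rintro x ⟨v, -, rfl⟩; exact hlow v⟩
  set c : ℕ := ((Finset.univ.erase i0).erase i1).card with hc
  have hc' : ((Finset.univ.erase i1).erase i0).card = c := by
    rw [hc, Finset.card_erase_of_mem hmem1, Finset.card_erase_of_mem hmem0,
      Finset.card_erase_of_mem (Finset.mem_univ _), Finset.card_erase_of_mem (Finset.mem_univ _)]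
  have hSle : ∀ M : ℝ, 0 ≤ M → sInf S ≤ 1 + 2 * (c:ℝ)^2 * (Real.exp (-M))^2 := by
    intro M hM
    set vM : Fin k → ℝ := fun j => if j = i0 ∨ j = i1 then 0 else -M with hvM
    have hv0 : vM i0 = 0 := if_pos (Or.inl rfl)
    have hv1 : vM i1 = 0 := if_pos (Or.inr rfl)
    have hconstr : ∀ j, vM j ≤ vM i0 := by
      intro j
      rw [hv0]; simp only [hvM]
      split_ifs <;> linarith
    have hsum0 : ∑ j ∈ Finset.univ.erase i0, φc (vM i0 - vM j)
        = 1 + (c:ℝ) * Real.exp (-M) := by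
      rw [← Finset.add_sum_erase _ _ hmem1]
      congr 1
      · simp [hv0, hv1, φc]
      · rw [Finset.sum_congr rfl (g := fun _ => Real.exp (-M)) (fun j hj => ?_),
          Finset.sum_const, nsmul_eq_mul]
        simp only [Finset.mem_erase] at hj
        have : vM j = -M := by simp [hvM, hj.1, hj.2.1]
        simp [this, hv0, φc]
    have hsum1 : ∑ j ∈ Finset.univ.erase i1, φc (vM i1 - vM j)
        = 1 + (c:ℝ) * Real.exp (-M) := by
      rw [← Finset.add_sum_erase _ _ hmem0]
      congr 1
      · simp [hv0, hv1, φc]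
      · rw [Finset.sum_congr rfl (g := fun _ => Real.exp (-M)) (fun j hj => ?_),
          Finset.sum_const, nsmul_eq_mul, hc']
        simp only [Finset.mem_erase] at hj
        have : vM j = -M := by simp [hvM, hj.2.1, hj.1]
        simp [this, hv1, φc]
    have hnl : ¬ (1 + (c:ℝ) * Real.exp (-M) < 1) := by
      push_neg
      nlinarith [Real.exp_pos (-M), Nat.cast_nonneg (α := ℝ) c]
    have hL0 : gammaPhiLoss γc φc vM i0 = 1 + 2*(c:ℝ)^2*(Real.exp (-M))^2 := by
      rw [gammaPhiLoss, hsum0, γc, if_neg hnl]; ring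
    have hL1 : gammaPhiLoss γc φc vM i1 = 1 + 2*(c:ℝ)^2*(Real.exp (-M))^2 := by
      rw [gammaPhiLoss, hsum1, γc, if_neg hnl]; ring
    have heq : condRisk γc φc p vM = 1 + 2*(c:ℝ)^2*(Real.exp (-M))^2 := by
      rw [hrisk, hL0, hL1]; ring
    have := csInf_le hSbdd (show condRisk γc φc p vM ∈ S from ⟨vM, hconstr, rfl⟩)
    rwa [heq] at this
  have htend : Filter.Tendsto (fun M : ℝ => 1 + 2*(c:ℝ)^2*(Real.exp (-M))^2)
      Filter.atTop (nhds 1) := by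
    have h0 : Filter.Tendsto (fun M : ℝ => Real.exp (-M)) Filter.atTop (nhds 0) :=
      Real.tendsto_exp_neg_atTop_nhds_zero
    have := ((h0.pow 2).const_mul (2*(c:ℝ)^2)).const_add 1
    simpa using this
  have hsinf : sInf S ≤ 1 :=
    ge_of_tendsto htend (Filter.eventually_atTop.mpr ⟨0, fun M hM => hSle M hM⟩)
  have hiinf : 1 ≤ ⨅ v : Fin k → ℝ, condRisk γc φc p v := le_ciInf hlow
  have hH := H p hpnn hpsum i0 ⟨i1, hlt⟩
  rw [← hS] at hH
  linarith

/-- `γc` is strictly increasing on `[0,∞)` with values in `[0,∞)` and `sup γc = +∞`, and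
`φc` is nonnegative, differentiable, non-increasing with `φc'(0) < 0` and `inf φc = 0`,
yet the associated Gamma-Phi loss is NOT classification-calibrated. -/
theorem gammaPhi_counterexample {k : ℕ} (hk : 2 ≤ k) :
    StrictMonoOn γc (Set.Ici 0) ∧ (∀ x ≥ (0 : ℝ), 0 ≤ γc x) ∧
    ¬ BddAbove (γc '' Set.Ici 0) ∧
    (∀ x, 0 ≤ φc x) ∧ Differentiable ℝ φc ∧ Antitone φc ∧
    deriv φc 0 < 0 ∧ (⨅ x : ℝ, φc x = 0) ∧
    ¬ (∀ p : Fin k → ℝ, (∀ j, 0 ≤ p j) → (∑ j, p j = 1) →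
        ∀ y : Fin k, (∃ j, p y < p j) →
          (⨅ v : Fin k → ℝ, condRisk γc φc p v) <
            sInf {c | ∃ v : Fin k → ℝ, (∀ j, v j ≤ v y) ∧ c = condRisk γc φc p v}) := by
  refine ⟨gamma_strict, gamma_nonneg, gamma_unbdd, fun x => (Real.exp_pos (-x)).le,
    fun x => (phi_hasDeriv x).differentiableAt, ?_, ?_, phi_iInf, main_neg hk⟩
  · intro a b hab
    exact Real.exp_le_exp.mpr (by linarith)
  · rw [(phi_hasDeriv 0).deriv]
    simpa using Real.exp_pos (-(0:ℝ))
end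

section
/- Let φ(x) = exp(−x) and γ(x) = 1 − (x−1)^2 for x < 1, γ(x) = 2(x−1)^2 + 1 for x ≥ 1. Fix r ∈ [1/3, 2/3] and define F(x) = r·γ(φ(x)) + (1−r)·γ(φ(−x)). Then F has a unique global minimizer at x = 0; moreover F is decreasing on (−∞, 0) and increasing on (0, ∞). -/
/-- `F(x) = r·γ(φ(x)) + (1−r)·γ(φ(−x))`. -/
noncomputable def Fc (r x : ℝ) : ℝ := r * γc (φc x) + (1 - r) * γc (φc (-x))

lemma Fc_eq_of_nonneg (r x : ℝ) (hx : 0 ≤ x) :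
    Fc r x = r * (1 - (Real.exp (-x) - 1)^2) + (1-r) * (2*(Real.exp x - 1)^2 + 1) := by
  have h1 : Real.exp (-x) ≤ 1 := Real.exp_le_one_iff.mpr (by linarith)
  have h2 : ¬ (Real.exp x < 1) := not_lt.mpr (Real.one_le_exp hx)
  simp only [Fc, γc, φc, neg_neg]
  rw [if_neg h2]
  by_cases h : Real.exp (-x) < 1
  · simp only [h, ↓reduceIte]
  · simp only [h, ↓reduceIte]; rw [le_antisymm h1 (not_lt.mp h)]; ring

lemma Fc_core (r A B : ℝ) (hr1 : 1/3 ≤ r) (hr2 : r ≤ 2/3) (hA : 1 ≤ A) (hAB : A < B) :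
    r * (1 - (A⁻¹-1)^2) + (1-r) * (2*(A-1)^2+1) <
      r * (1 - (B⁻¹-1)^2) + (1-r) * (2*(B-1)^2+1) := by
  have hA0 : (0:ℝ) < A := by linarith
  have hB0 : (0:ℝ) < B := by linarith
  rw [← sub_pos]
  have e : r * (1 - (B⁻¹-1)^2) + (1-r) * (2*(B-1)^2+1)
      - (r * (1 - (A⁻¹-1)^2) + (1-r) * (2*(A-1)^2+1))
      = (r*((A-1)^2*B^2 - (B-1)^2*A^2)
          + 2*(1-r)*((B-1)^2-(A-1)^2)*(A^2*B^2)) / (A^2*B^2) := by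
    field_simp
    ring
  rw [e]
  apply div_pos _ (by positivity)
  have hba : (A-1)^2 < (B-1)^2 := by nlinarith
  have h1 : (A^2-1)*B^2 ≤ (B^2-1)*A^2 := by nlinarith
  have h2 : (A^2-1)*B^2*(A-1)^2 ≤ (B^2-1)*A^2*(A-1)^2 :=
    mul_le_mul_of_nonneg_right h1 (sq_nonneg _)
  have h3 : 0 < A^2*(B^2-1)*((B-1)^2-(A-1)^2) :=
    mul_pos (mul_pos (by positivity) (by nlinarith)) (by linarith)
  have hK : 0 < (A-1)^2*B^2 - (B-1)^2*A^2 + ((B-1)^2-(A-1)^2)*(A^2*B^2) := by nlinarith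
  have h4 : 0 ≤ (2-3*r)*(((B-1)^2-(A-1)^2)*(A^2*B^2)) :=
    mul_nonneg (by linarith) (mul_nonneg (by linarith) (by positivity))
  nlinarith [mul_pos (by linarith : (0:ℝ) < r) hK]

lemma Fc_mono (r : ℝ) (hr1 : 1/3 ≤ r) (hr2 : r ≤ 2/3) :
    StrictMonoOn (Fc r) (Set.Ici 0) := by
  intro x hx y hy hxy
  rw [Fc_eq_of_nonneg r x hx, Fc_eq_of_nonneg r y hy,
      Real.exp_neg x, Real.exp_neg y]
  exact Fc_core r _ _ hr1 hr2 (Real.one_le_exp hx) (Real.exp_lt_exp.mpr hxy)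

lemma Fc_symm (r x : ℝ) : Fc r (-x) = Fc (1-r) x := by
  simp only [Fc, neg_neg]; ring

/-- For `r ∈ [1/3, 2/3]`, the function `F` is strictly decreasing on `(−∞, 0]`, strictly
increasing on `[0, ∞)`, and has a unique global minimizer at `0`. -/
theorem Fc_unique_min (r : ℝ) (hr : r ∈ Set.Icc (1/3 : ℝ) (2/3)) :
    StrictAntiOn (Fc r) (Set.Iic 0) ∧ StrictMonoOn (Fc r) (Set.Ici 0) ∧
    ∀ x : ℝ, x ≠ 0 → Fc r 0 < Fc r x := by
  obtain ⟨hr1, hr2⟩ := hr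
  have hr1' : 1/3 ≤ 1 - r := by linarith
  have hr2' : 1 - r ≤ 2/3 := by linarith
  have hmono := Fc_mono r hr1 hr2
  have hanti : StrictAntiOn (Fc r) (Set.Iic 0) := by
    intro x hx y hy hxy
    have h' : Fc (1-r) (-y) < Fc (1-r) (-x) :=
      Fc_mono (1-r) hr1' hr2' (Set.mem_Ici.mpr (neg_nonneg.mpr (Set.mem_Iic.mp hy)))
        (Set.mem_Ici.mpr (neg_nonneg.mpr (Set.mem_Iic.mp hx))) (neg_lt_neg hxy)
    rw [Fc_symm, Fc_symm] at h'
    simpa using h'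
  refine ⟨hanti, hmono, fun x hx => ?_⟩
  rcases lt_or_gt_of_ne hx with h | h
  · exact hanti (Set.mem_Iic.mpr h.le) (Set.mem_Iic.mpr le_rfl) h
  · exact hmono (Set.mem_Ici.mpr le_rfl) (Set.mem_Ici.mpr h.le) h
end

section
/- Let L : R^k → R^k_{≥0} be a permutation equivariant multiclass loss that is NOT classification-calibrated, and let X be a nonempty measurable space. Then L does not have the consistency transfer property: there exists a probability distribution P on X × [k] and a sequence of Borel functions f̂_n : X → R^k such that R_{L,P}(f̂_n) → inf_f R_{L,P}(f) but R_{01,P}(argmax ∘ f̂_n) does not converge to inf_h R_{01,P}(h), where the infimums are over Borel f : X → R^k and h : X → [k]. -/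
open Filter Topology MeasureTheory

section AuxCTP

variable {k : ℕ} {X : Type*} [MeasurableSpace X]

/-- The point-mass-mixture measure used in the counterexample. -/
noncomputable def ctpMeasure (p : Fin k → ℝ) (x0 : X) : Measure (X × Fin k) :=
  ∑ j : Fin k, ENNReal.ofReal (p j) • Measure.dirac (x0, j)

lemma ctpMeasure_apply (p : Fin k → ℝ) (x0 : X) (s : Set (X × Fin k)) (hs : MeasurableSet s) :
    ctpMeasure p x0 s = ∑ j : Fin k, s.indicator (fun _ => ENNReal.ofReal (p j)) (x0, j) := by
  rw [ctpMeasure, Measure.finset_sum_apply]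
  refine Finset.sum_congr rfl fun j _ => ?_
  rw [Measure.smul_apply, Measure.dirac_apply' _ hs]
  by_cases h : (x0, j) ∈ s
  · rw [Set.indicator_of_mem h, Set.indicator_of_mem h, Pi.one_apply, smul_eq_mul, mul_one]
  · rw [Set.indicator_of_notMem h, Set.indicator_of_notMem h, smul_eq_mul, mul_zero]

lemma ctpMeasure_integral (p : Fin k → ℝ) (hp0 : ∀ j, 0 ≤ p j) (x0 : X)
    (F : X × Fin k → ℝ) (hF : Measurable F) :
    ∫ z, F z ∂(ctpMeasure p x0) = ∑ j : Fin k, p j * F (x0, j) := by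
  rw [ctpMeasure, integral_finset_sum_measure ?_]
  · refine Finset.sum_congr rfl fun j _ => ?_
    rw [integral_smul_measure, integral_dirac' F _ hF.stronglyMeasurable,
      ENNReal.toReal_ofReal (hp0 j), smul_eq_mul]
  · intro j _
    constructor
    · exact hF.aestronglyMeasurable
    · rw [HasFiniteIntegral, lintegral_smul_measure, lintegral_dirac' _ hF.enorm]
      exact ENNReal.mul_lt_top ENNReal.ofReal_lt_top (by simp)

lemma ctpMeasure_risk (L : (Fin k → ℝ) → Fin k → ℝ) (p : Fin k → ℝ) (hp0 : ∀ j, 0 ≤ p j)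
    (x0 : X) (g : X → Fin k → ℝ) (hg : Measurable g) :
    ∫ z, L (g z.1) z.2 ∂(ctpMeasure p x0) = condRiskL L p (g x0) := by
  have hmeas : Measurable fun z : X × Fin k => L (g x0) z.2 :=
    Measurable.of_discrete.comp measurable_snd
  have hts : MeasurableSet {z : X × Fin k | g z.1 ≠ g x0} := by
    have hm : Measurable fun z : X × Fin k => g z.1 := hg.comp measurable_fst
    exact (hm (measurableSet_singleton (g x0))).compl
  have hae : (fun z : X × Fin k => L (g z.1) z.2) =ᵐ[ctpMeasure p x0]
      (fun z => L (g x0) z.2) := by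
    rw [Filter.EventuallyEq, ae_iff]
    refine measure_mono_null (t := {z : X × Fin k | g z.1 ≠ g x0}) (fun z hz => ?_) ?_
    · show g z.1 ≠ g x0
      intro h
      exact hz (show L (g z.1) z.2 = L (g x0) z.2 by rw [h])
    · rw [ctpMeasure_apply _ _ _ hts]
      refine Finset.sum_eq_zero fun j _ => ?_
      exact Set.indicator_of_notMem (by simp) _
  rw [integral_congr_ae hae, ctpMeasure_integral p hp0 x0 _ hmeas]
  rfl

lemma ctpMeasure_prob (p : Fin k → ℝ) (hp0 : ∀ j, 0 ≤ p j) (hp1 : ∑ j, p j = 1)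
    (x0 : X) (g : X → Fin k) (hg : Measurable g) :
    ((ctpMeasure p x0) {z | g z.1 ≠ z.2}).toReal = 1 - p (g x0) := by
  have hs : MeasurableSet {z : X × Fin k | g z.1 ≠ z.2} :=
    (measurableSet_eq_fun (hg.comp measurable_fst) measurable_snd).compl
  rw [ctpMeasure_apply _ _ _ hs]
  have h1 : ∀ j : Fin k, ({z : X × Fin k | g z.1 ≠ z.2}).indicator
      (fun _ => ENNReal.ofReal (p j)) (x0, j)
      = ENNReal.ofReal (if g x0 = j then 0 else p j) := by
    intro j
    by_cases h : g x0 = j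
    · rw [Set.indicator_of_notMem (by simp [h]), if_pos h, ENNReal.ofReal_zero]
    · rw [Set.indicator_of_mem (by simpa using h), if_neg h]
  rw [Finset.sum_congr rfl fun j _ => h1 j,
    ← ENNReal.ofReal_sum_of_nonneg (fun j _ => by by_cases h : g x0 = j <;> simp [h, hp0 j])]
  have h2 : ∑ j : Fin k, (if g x0 = j then 0 else p j)
      = (∑ j : Fin k, p j) - p (g x0) := by
    have h3 : ∀ j : Fin k, (if g x0 = j then 0 else p j)
        = p j - (if g x0 = j then p j else 0) := by
      intro j; by_cases h : g x0 = j <;> simp [h]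
    rw [Finset.sum_congr rfl fun j _ => h3 j, Finset.sum_sub_distrib, Finset.sum_ite_eq]
    simp
  have hle1 : p (g x0) ≤ 1 := by
    rw [← hp1]
    exact Finset.single_le_sum (fun j _ => hp0 j) (Finset.mem_univ _)
  rw [h2, hp1, ENNReal.toReal_ofReal (by linarith)]

end AuxCTP

/-- If a permutation equivariant loss is not classification-calibrated, it fails the
consistency transfer property: there are a probability distribution `P` on `X × [k]` and
a sequence of measurable score functions whose `L`-risks converge to the Bayes `L`-risk,
while the 01-risks of the induced (argmax) classifiers do not converge to the Bayes
01-risk. -/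
theorem not_calibrated_imp_no_consistency_transfer {k : ℕ} (hk : 2 ≤ k)
    (L : (Fin k → ℝ) → Fin k → ℝ)
    (hL0 : ∀ v y, 0 ≤ L v y)
    (hequiv : ∀ (σ : Equiv.Perm (Fin k)) (v : Fin k → ℝ),
      L (fun j => v (σ j)) = fun j => L v (σ j))
    (hnc : ¬ ClassificationCalibrated L)
    (X : Type*) [MeasurableSpace X] [Nonempty X] :
    ∃ P : Measure (X × Fin k), IsProbabilityMeasure P ∧
      ∃ f : ℕ → X → Fin k → ℝ, (∀ n, Measurable (f n)) ∧
        ∃ h : ℕ → X → Fin k, (∀ n, Measurable (h n)) ∧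
          (∀ n x j, f n x j ≤ f n x (h n x)) ∧
          Tendsto (fun n => ∫ z, L (f n z.1) z.2 ∂P) atTop
            (𝓝 (sInf {c | ∃ g : X → Fin k → ℝ, Measurable g ∧
                  c = ∫ z, L (g z.1) z.2 ∂P})) ∧
          ¬ Tendsto (fun n => (P {z | h n z.1 ≠ z.2}).toReal) atTop
            (𝓝 (sInf {c | ∃ g : X → Fin k, Measurable g ∧
                  c = (P {z | g z.1 ≠ z.2}).toReal})) := by
  rw [ClassificationCalibrated] at hnc
  push_neg at hnc
  obtain ⟨p, hp0, hp1, y, ⟨j0, hj0⟩, hle⟩ := hnc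
  set r : ℝ := ⨅ v : Fin k → ℝ, condRiskL L p v with hr
  have hcr0 : ∀ v, 0 ≤ condRiskL L p v := fun v =>
    Finset.sum_nonneg fun j _ => mul_nonneg (hp0 j) (hL0 v j)
  have hbdd : BddBelow (Set.range fun v : Fin k → ℝ => condRiskL L p v) :=
    ⟨0, by rintro c ⟨v, rfl⟩; exact hcr0 v⟩
  have hr_le : ∀ v, r ≤ condRiskL L p v := fun v => ciInf_le hbdd v
  have hSne : Set.Nonempty {c | ∃ v : Fin k → ℝ, (∀ j, v j ≤ v y) ∧ c = condRiskL L p v} :=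
    ⟨condRiskL L p (fun _ => 0), fun _ => 0, fun j => le_refl _, rfl⟩
  have hex : ∀ n : ℕ, ∃ v : Fin k → ℝ, (∀ j, v j ≤ v y) ∧
      condRiskL L p v < r + 1 / (n + 1) := by
    intro n
    have hpos : (0:ℝ) < 1 / (n + 1) := by positivity
    have h1 : sInf {c | ∃ v : Fin k → ℝ, (∀ j, v j ≤ v y) ∧ c = condRiskL L p v}
        < r + 1 / (n + 1) := lt_of_le_of_lt hle (lt_add_of_pos_right r hpos)
    obtain ⟨c, ⟨v, hvy, rfl⟩, hc⟩ := exists_lt_of_csInf_lt hSne h1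
    exact ⟨v, hvy, hc⟩
  choose v hv1 hv2 using hex
  obtain ⟨x0⟩ := ‹Nonempty X›
  refine ⟨ctpMeasure p x0, ?_, fun n _ => v n, fun n => measurable_const,
    fun n _ => y, fun n => measurable_const, fun n x j => hv1 n j, ?_, ?_⟩
  · constructor
    rw [ctpMeasure_apply _ _ _ MeasurableSet.univ]
    simp only [Set.indicator_of_mem (Set.mem_univ _)]
    rw [← ENNReal.ofReal_sum_of_nonneg (fun j _ => hp0 j), hp1, ENNReal.ofReal_one]
  · -- L-risk convergence
    have hSL : {c | ∃ g : X → Fin k → ℝ, Measurable g ∧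
        c = ∫ z, L (g z.1) z.2 ∂(ctpMeasure p x0)} = Set.range (condRiskL L p) := by
      ext c
      constructor
      · rintro ⟨g, hg, rfl⟩
        exact ⟨g x0, (ctpMeasure_risk L p hp0 x0 g hg).symm⟩
      · rintro ⟨w, rfl⟩
        exact ⟨fun _ => w, measurable_const,
          (ctpMeasure_risk L p hp0 x0 (fun _ => w) measurable_const).symm⟩
    rw [hSL, sInf_range, ← hr]
    have heq : (fun n => ∫ z, L (((fun (_ : X) => v n)) z.1) z.2 ∂(ctpMeasure p x0))
        = fun n => condRiskL L p (v n) :=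
      funext fun n => ctpMeasure_risk L p hp0 x0 (fun _ => v n) measurable_const
    rw [heq]
    have htop : Tendsto (fun n : ℕ => r + 1 / (n + 1 : ℝ)) atTop (𝓝 r) := by
      have h0 : Tendsto (fun n : ℕ => 1 / (n + 1 : ℝ)) atTop (𝓝 0) :=
        tendsto_one_div_add_atTop_nhds_zero_nat
      simpa using tendsto_const_nhds.add h0
    exact tendsto_of_tendsto_of_tendsto_of_le_of_le tendsto_const_nhds htop
      (fun n => hr_le (v n)) (fun n => (hv2 n).le)
  · -- 01-risk non-convergence
    intro hT
    have hval : (fun n : ℕ => ((ctpMeasure p x0)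
        {z : X × Fin k | (fun (_ : X) => y) z.1 ≠ z.2}).toReal) = fun _ => 1 - p y :=
      funext fun n => ctpMeasure_prob p hp0 hp1 x0 (fun _ => y) measurable_const
    rw [hval] at hT
    have huniq : (1 - p y : ℝ) = sInf {c | ∃ g : X → Fin k, Measurable g ∧
        c = ((ctpMeasure p x0) {z | g z.1 ≠ z.2}).toReal} :=
      tendsto_nhds_unique tendsto_const_nhds hT
    have hmem : (1 - p j0 : ℝ) ∈ {c | ∃ g : X → Fin k, Measurable g ∧
        c = ((ctpMeasure p x0) {z | g z.1 ≠ z.2}).toReal} :=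
      ⟨fun _ => j0, measurable_const,
        (ctpMeasure_prob p hp0 hp1 x0 (fun _ => j0) measurable_const).symm⟩
    have hbb : BddBelow {c | ∃ g : X → Fin k, Measurable g ∧
        c = ((ctpMeasure p x0) {z | g z.1 ≠ z.2}).toReal} :=
      ⟨0, by rintro c ⟨g, hg, rfl⟩; exact ENNReal.toReal_nonneg⟩
    have := csInf_le hbb hmem
    linarith
end
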